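/- arXiv:2306.05724 — 2 statements merged into one kernel-verified Lean document; each statement's English description precedes it below -/
import Mathlib

section
/- The population average of the marginal contribution in the information-gain game equals the conditional mutual information of Y and X_j given X_S and is hence nonnegative: for every j ∈ Fin d and S ⊆ Fin d with j ∉ S, Σ_x P(x) · Δ_{v_IG}(S, j, x) = H(Y|X_S) − H(Y|X_{S∪{j}}), where H(Y|X_S) := Σ_x P(x) · H(Y|x_S), and this common value is ≥ 0. -/
open Finset Real

noncomputable section

/-- Conditional pmf `p(y | x_S)` in the finite discrete setting. -/
def condP {d : ℕ} {Xf : Fin d → Type*} {Y : Type*} [∀ j, Fintype (Xf j)] [Fintype Y]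
    [∀ j, DecidableEq (Xf j)]
    (p : ((∀ j, Xf j) × Y) → ℝ) (S : Finset (Fin d)) (x : ∀ j, Xf j) (y : Y) : ℝ :=
  (∑ x' : ∀ j, Xf j, if ∀ j ∈ S, x' j = x j then p (x', y) else 0) /
  (∑ x' : ∀ j, Xf j, if ∀ j ∈ S, x' j = x j then ∑ y' : Y, p (x', y') else 0)

/-- Marginal feature pmf `P(x)`. -/
def margP {d : ℕ} {Xf : Fin d → Type*} {Y : Type*} [Fintype Y]
    (p : ((∀ j, Xf j) × Y) → ℝ) (x : ∀ j, Xf j) : ℝ :=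
  ∑ y : Y, p (x, y)

/-- Local conditional entropy `H(Y | x_S)`. -/
def entY {d : ℕ} {Xf : Fin d → Type*} {Y : Type*} [∀ j, Fintype (Xf j)] [Fintype Y]
    [∀ j, DecidableEq (Xf j)]
    (p : ((∀ j, Xf j) × Y) → ℝ) (S : Finset (Fin d)) (x : ∀ j, Xf j) : ℝ :=
  -∑ y : Y, condP p S x y * Real.log (condP p S x y)

/-- The KL-divergence game `v_KL(S, x) = -D_KL(p(Y|x) ‖ p(Y|x_S))`. -/
def vKL {d : ℕ} {Xf : Fin d → Type*} {Y : Type*} [∀ j, Fintype (Xf j)] [Fintype Y]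
    [∀ j, DecidableEq (Xf j)]
    (p : ((∀ j, Xf j) × Y) → ℝ) (S : Finset (Fin d)) (x : ∀ j, Xf j) : ℝ :=
  -∑ y : Y, condP p Finset.univ x y *
      Real.log (condP p Finset.univ x y / condP p S x y)

/-- The cross-entropy game `v_CE(S, x) = -H(p(Y|x), p(Y|x_S))`. -/
def vCE {d : ℕ} {Xf : Fin d → Type*} {Y : Type*} [∀ j, Fintype (Xf j)] [Fintype Y]
    [∀ j, DecidableEq (Xf j)]
    (p : ((∀ j, Xf j) × Y) → ℝ) (S : Finset (Fin d)) (x : ∀ j, Xf j) : ℝ :=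
  ∑ y : Y, condP p Finset.univ x y * Real.log (condP p S x y)

/-- The information-gain game `v_IG(S, x) = -H(Y | x_S)`. -/
def vIG {d : ℕ} {Xf : Fin d → Type*} {Y : Type*} [∀ j, Fintype (Xf j)] [Fintype Y]
    [∀ j, DecidableEq (Xf j)]
    (p : ((∀ j, Xf j) × Y) → ℝ) (S : Finset (Fin d)) (x : ∀ j, Xf j) : ℝ :=
  -entY p S x

/-- The local entropy game `v_H(S, x) = H(Y | x_S)`. -/
def vH {d : ℕ} {Xf : Fin d → Type*} {Y : Type*} [∀ j, Fintype (Xf j)] [Fintype Y]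
    [∀ j, DecidableEq (Xf j)]
    (p : ((∀ j, Xf j) × Y) → ℝ) (S : Finset (Fin d)) (x : ∀ j, Xf j) : ℝ :=
  entY p S x

/-- The marginalized entropy game
`v_{H*}(S, x) = E[H(Y | x') | x'_S = x_S] = ∑_{x' : x'_S = x_S} P(x' | x_S) H(Y|x')`. -/
def vHstar {d : ℕ} {Xf : Fin d → Type*} {Y : Type*} [∀ j, Fintype (Xf j)] [Fintype Y]
    [∀ j, DecidableEq (Xf j)]
    (p : ((∀ j, Xf j) × Y) → ℝ) (S : Finset (Fin d)) (x : ∀ j, Xf j) : ℝ :=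
  ∑ x' : ∀ j, Xf j,
    if ∀ j ∈ S, x' j = x j then
      (margP p x' /
          ∑ x'' : ∀ j, Xf j, if ∀ j ∈ S, x'' j = x j then margP p x'' else 0) *
        entY p Finset.univ x'
    else 0

/-- The Shapley value `φ_v(j, x)` of feature `j` at point `x` for the game `v`. -/
def shapley {d : ℕ} {X : Type*} (v : Finset (Fin d) → X → ℝ) (j : Fin d) (x : X) : ℝ :=
  ∑ S ∈ (Finset.univ.erase j).powerset,
    ((S.card.factorial : ℝ) * ((d - S.card - 1).factorial : ℝ) / (d.factorial : ℝ)) *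
      (v (insert j S) x - v S x)

section Helpers

variable {d : ℕ} {Xf : Fin d → Type*} {Y : Type*} [∀ j, Fintype (Xf j)] [Fintype Y]
    [∀ j, DecidableEq (Xf j)]

lemma condP_congr (p : ((∀ j, Xf j) × Y) → ℝ) (W : Finset (Fin d)) {x x' : ∀ j, Xf j}
    (h : ∀ i ∈ W, x i = x' i) (y : Y) : condP p W x y = condP p W x' y := by
  unfold condP
  have hc : ∀ x'' : ∀ j, Xf j, (∀ j ∈ W, x'' j = x j) ↔ (∀ j ∈ W, x'' j = x' j) :=
    fun x'' => forall₂_congr fun i hi => by rw [h i hi]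
  congr 1 <;> exact Finset.sum_congr rfl fun x'' _ => if_congr (hc x'') rfl rfl

lemma denom_pos [Nonempty Y] (p : ((∀ j, Xf j) × Y) → ℝ) (hpos : ∀ z, 0 < p z)
    (W : Finset (Fin d)) (x : ∀ j, Xf j) :
    0 < ∑ x' : ∀ j, Xf j, (if ∀ j ∈ W, x' j = x j then ∑ y' : Y, p (x', y') else 0) := by
  apply Finset.sum_pos'
  · intro x' _
    split
    · exact Finset.sum_nonneg fun _ _ => (hpos _).le
    · exact le_refl 0
  · refine ⟨x, Finset.mem_univ x, ?_⟩
    rw [if_pos (fun _ _ => rfl)]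
    exact Finset.sum_pos (fun y _ => hpos _) Finset.univ_nonempty

lemma condP_pos [Nonempty Y] (p : ((∀ j, Xf j) × Y) → ℝ) (hpos : ∀ z, 0 < p z)
    (W : Finset (Fin d)) (x : ∀ j, Xf j) (y : Y) : 0 < condP p W x y := by
  unfold condP
  apply div_pos _ (denom_pos p hpos W x)
  apply Finset.sum_pos'
  · intro x' _
    split
    · exact (hpos _).le
    · exact le_refl 0
  · exact ⟨x, Finset.mem_univ x, by rw [if_pos (fun _ _ => rfl)]; exact hpos _⟩

lemma condP_sum_one [Nonempty Y] (p : ((∀ j, Xf j) × Y) → ℝ) (hpos : ∀ z, 0 < p z)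
    (W : Finset (Fin d)) (x : ∀ j, Xf j) : ∑ y : Y, condP p W x y = 1 := by
  unfold condP
  rw [← Finset.sum_div]
  rw [Finset.sum_comm]
  have : ∀ x' : ∀ j, Xf j,
      (∑ y : Y, if ∀ j ∈ W, x' j = x j then p (x', y) else 0) =
      (if ∀ j ∈ W, x' j = x j then ∑ y' : Y, p (x', y') else 0) := by
    intro x'
    split
    · rfl
    · simp
  rw [Finset.sum_congr rfl fun x' _ => this x']
  exact div_self (denom_pos p hpos W x).ne'

/-- Tower property: averaging the conditional pmf against a function that only
depends on the coordinates in `W` recovers the joint pmf. -/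
lemma tower [Nonempty Y] (p : ((∀ j, Xf j) × Y) → ℝ) (hpos : ∀ z, 0 < p z)
    (W : Finset (Fin d)) (y : Y) (f : (∀ j, Xf j) → ℝ)
    (hf : ∀ x x' : ∀ j, Xf j, (∀ i ∈ W, x i = x' i) → f x = f x') :
    ∑ x : ∀ j, Xf j, margP p x * condP p W x y * f x = ∑ x : ∀ j, Xf j, p (x, y) * f x := by
  classical
  set B : (∀ j, Xf j) → ℝ :=
    fun x => ∑ x' : ∀ j, Xf j, (if ∀ j ∈ W, x' j = x j then ∑ y' : Y, p (x', y') else 0)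
    with hB
  have hBpos : ∀ x, 0 < B x := fun x => denom_pos p hpos W x
  have hBcongr : ∀ x x' : ∀ j, Xf j, (∀ i ∈ W, x i = x' i) → B x = B x' := by
    intro x x' h
    apply Finset.sum_congr rfl
    intro x'' _
    exact if_congr (forall₂_congr fun i hi => by rw [h i hi]) rfl rfl
  have hcond : ∀ x : ∀ j, Xf j, condP p W x y =
      (∑ x' : ∀ j, Xf j, if ∀ j ∈ W, x' j = x j then p (x', y) else 0) / B x :=
    fun x => rfl
  have step1 : ∀ x : ∀ j, Xf j, margP p x * condP p W x y * f x =
      ∑ x' : ∀ j, Xf j,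
        (if ∀ j ∈ W, x' j = x j then p (x', y) * (margP p x * f x / B x) else 0) := by
    intro x
    have hsplit : (∑ x' : ∀ j, Xf j,
        (if ∀ j ∈ W, x' j = x j then p (x', y) * (margP p x * f x / B x) else 0)) =
        (∑ x' : ∀ j, Xf j, if ∀ j ∈ W, x' j = x j then p (x', y) else 0) *
          (margP p x * f x / B x) := by
      rw [Finset.sum_mul]
      exact Finset.sum_congr rfl fun x' _ => by split <;> simp
    rw [hcond x, hsplit]
    ring
  rw [Finset.sum_congr rfl fun x _ => step1 x, Finset.sum_comm]
  apply Finset.sum_congr rfl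
  intro x' _
  have key : ∀ x : ∀ j, Xf j,
      (if ∀ j ∈ W, x' j = x j then p (x', y) * (margP p x * f x / B x) else 0) =
      (p (x', y) * f x' / B x') * (if ∀ j ∈ W, x' j = x j then margP p x else 0) := by
    intro x
    split
    case isTrue h =>
      have h' : ∀ i ∈ W, x i = x' i := fun i hi => (h i hi).symm
      rw [hf x x' h', hBcongr x x' h']
      ring
    case isFalse h => ring
  rw [Finset.sum_congr rfl fun x _ => key x, ← Finset.mul_sum]
  have hBx' : (∑ x : ∀ j, Xf j, if ∀ j ∈ W, x' j = x j then margP p x else 0) = B x' := by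
    apply Finset.sum_congr rfl
    intro x _
    unfold margP
    exact if_congr (forall₂_congr fun i hi => eq_comm) rfl rfl
  rw [hBx', div_mul_cancel₀ _ (hBpos x').ne']

lemma kl_nonneg {Y : Type*} [Fintype Y] (q r : Y → ℝ) (hq : ∀ y, 0 < q y)
    (hr : ∀ y, 0 < r y) (hq1 : ∑ y, q y = 1) (hr1 : ∑ y, r y = 1) :
    0 ≤ ∑ y, q y * (Real.log (q y) - Real.log (r y)) := by
  have h : ∀ y, q y - r y ≤ q y * (Real.log (q y) - Real.log (r y)) := by
    intro y
    have hlog : Real.log (r y / q y) ≤ r y / q y - 1 :=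
      Real.log_le_sub_one_of_pos (div_pos (hr y) (hq y))
    rw [Real.log_div (hr y).ne' (hq y).ne'] at hlog
    have hmul := mul_le_mul_of_nonneg_left hlog (hq y).le
    have hc : q y * (r y / q y) = r y := by
      rw [mul_comm]; exact div_mul_cancel₀ (r y) (hq y).ne'
    nlinarith [hq y]
  have := Finset.sum_le_sum (fun y (_ : y ∈ Finset.univ) => h y)
  rw [Finset.sum_sub_distrib, hq1, hr1] at this
  linarith

end Helpers

/-- the population average of the information-gain marginal contribution
equals the conditional mutual information `H(Y|X_S) - H(Y|X_(S∪j))` and is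
nonnegative. -/
theorem avg_ig_marginal_contribution {d : ℕ} (hd : 1 ≤ d) {Xf : Fin d → Type*} {Y : Type*}
    [∀ j, Fintype (Xf j)] [∀ j, Nonempty (Xf j)] [∀ j, DecidableEq (Xf j)]
    [Fintype Y] [Nonempty Y]
    (p : ((∀ j, Xf j) × Y) → ℝ)
    (hpos : ∀ z : ((∀ j, Xf j) × Y), 0 < p z)
    (hsum : ∑ z : ((∀ j, Xf j) × Y), p z = 1)
    (j : Fin d) (S : Finset (Fin d)) (hjS : j ∉ S) :
    (∑ x : ∀ j, Xf j,
        margP p x * (vIG p (insert j S) x - vIG p S x) =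
      (∑ x : ∀ j, Xf j, margP p x * entY p S x) -
        ∑ x : ∀ j, Xf j, margP p x * entY p (insert j S) x) ∧
    0 ≤ ∑ x : ∀ j, Xf j,
        margP p x * (vIG p (insert j S) x - vIG p S x) := by
  classical
  have part1 : (∑ x : ∀ j, Xf j,
      margP p x * (vIG p (insert j S) x - vIG p S x)) =
      (∑ x : ∀ j, Xf j, margP p x * entY p S x) -
        ∑ x : ∀ j, Xf j, margP p x * entY p (insert j S) x := by
    rw [← Finset.sum_sub_distrib]
    exact Finset.sum_congr rfl fun x _ => by simp only [vIG]; ring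
  refine ⟨part1, ?_⟩
  rw [part1]
  -- Rewrite each averaged entropy through the tower property.
  have e : ∀ W : Finset (Fin d), (∑ x : ∀ j, Xf j, margP p x * entY p W x) =
      -∑ y : Y, ∑ x : ∀ j, Xf j, p (x, y) * Real.log (condP p W x y) := by
    intro W
    have h1 : ∀ x : ∀ j, Xf j, margP p x * entY p W x =
        -∑ y : Y, margP p x * condP p W x y * Real.log (condP p W x y) := by
      intro x
      unfold entY
      rw [mul_neg, Finset.mul_sum]
      congr 1
      exact Finset.sum_congr rfl fun y _ => by ring
    rw [Finset.sum_congr rfl fun x _ => h1 x, Finset.sum_neg_distrib, Finset.sum_comm]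
    congr 1
    exact Finset.sum_congr rfl fun y _ =>
      tower p hpos W y (fun x => Real.log (condP p W x y))
        (fun x x' h => by
          show Real.log (condP p W x y) = Real.log (condP p W x' y)
          rw [condP_congr p W h y])
  rw [e S, e (insert j S), sub_neg_eq_add, ← Finset.sum_neg_distrib, ← Finset.sum_add_distrib]
  have hT : ∀ y : Y, (-∑ x : ∀ j, Xf j, p (x, y) * Real.log (condP p S x y)) +
      ∑ x : ∀ j, Xf j, p (x, y) * Real.log (condP p (insert j S) x y) =
      ∑ x : ∀ j, Xf j, margP p x * condP p (insert j S) x y *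
        (Real.log (condP p (insert j S) x y) - Real.log (condP p S x y)) := by
    intro y
    rw [tower p hpos (insert j S) y
      (fun x => Real.log (condP p (insert j S) x y) - Real.log (condP p S x y))
      (fun x x' h => by
        show Real.log (condP p (insert j S) x y) - Real.log (condP p S x y) =
          Real.log (condP p (insert j S) x' y) - Real.log (condP p S x' y)
        rw [condP_congr p (insert j S) h y,
          condP_congr p S (fun i hi => h i (Finset.mem_insert_of_mem hi)) y])]
    rw [← Finset.sum_neg_distrib, ← Finset.sum_add_distrib]
    refine Finset.sum_congr rfl fun x _ => by beta_reduce; ring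
  rw [Finset.sum_congr rfl fun y (_ : y ∈ Finset.univ) => hT y, Finset.sum_comm]
  apply Finset.sum_nonneg
  intro x _
  have hinner : (∑ y : Y, margP p x * condP p (insert j S) x y *
      (Real.log (condP p (insert j S) x y) - Real.log (condP p S x y))) =
      margP p x * ∑ y : Y, condP p (insert j S) x y *
        (Real.log (condP p (insert j S) x y) - Real.log (condP p S x y)) := by
    rw [Finset.mul_sum]
    exact Finset.sum_congr rfl fun y _ => by ring
  rw [hinner]
  apply mul_nonneg
  · exact Finset.sum_nonneg fun y _ => (hpos _).le
  · exact kl_nonneg (condP p (insert j S) x) (condP p S x)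
      (condP_pos p hpos (insert j S) x) (condP_pos p hpos S x)
      (condP_sum_one p hpos (insert j S) x) (condP_sum_one p hpos S x)
end
end

section
/- Exchangeable rank bound: let φ_1, …, φ_m, φ_{m+1} be i.i.d. real-valued random variables on a probability space (Ω, F, P) with m ≥ 1, and let 1 ≤ k ≤ m. For each ω ∈ Ω, let φ_{(k)}(ω) denote the k-th smallest value (counted with multiplicity) among φ_1(ω), …, φ_m(ω). Then P( φ_{m+1} ≤ φ_{(k)} ) ≥ k/(m+1). -/
open Finset Real

noncomputable section

/-- The `k`-th smallest value (counted with multiplicity) among `g 0, …, g (m-1)`. -/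
noncomputable def orderStat (m : ℕ) (g : Fin m → ℝ) (k : ℕ) : ℝ :=
  (List.insertionSort (· ≤ ·) (List.ofFn g)).getD (k - 1) 0

lemma countP_ofFn {n : ℕ} (g : Fin n → ℝ) (p : ℝ → Prop) [DecidablePred p] :
    (List.ofFn g).countP (fun a => decide (p a)) = (univ.filter fun i => p (g i)).card := by
  classical
  have h1 : (List.ofFn g).countP (fun a => decide (p a)) = Multiset.countP p ↑(List.ofFn g) :=
    (Multiset.coe_countP _ _).symm
  rw [h1, ← Fin.univ_val_map g, Multiset.countP_map]
  rfl

lemma le_orderStat_iff {m : ℕ} (g : Fin m → ℝ) (x : ℝ) (k : ℕ) (hk1 : 1 ≤ k) (hkm : k ≤ m) :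
    x ≤ orderStat m g k ↔ (univ.filter fun i => g i < x).card ≤ k - 1 := by
  classical
  set s := List.insertionSort (· ≤ ·) (List.ofFn g) with hs
  have hsort : s.Pairwise (· ≤ ·) := List.pairwise_insertionSort _ _
  have hperm : s.Perm (List.ofFn g) := List.perm_insertionSort _ _
  have hlen : s.length = m := by rw [hperm.length_eq, List.length_ofFn]
  have hcount : s.countP (fun a => decide (a < x)) = (univ.filter fun i => g i < x).card := by
    rw [hperm.countP_eq, countP_ofFn]
  have hk1m : k - 1 < m := by omega
  have hget : orderStat m g k = s.get ⟨k - 1, by omega⟩ := by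
    rw [orderStat, ← hs, List.getD_eq_getElem (l := s) (d := 0) (show k - 1 < s.length by omega)]
    rfl
  rw [← hcount, hget]
  constructor
  · intro hx
    -- entries with index ≥ k-1 are ≥ x
    have : s.countP (fun a => decide (a < x)) =
        (s.take (k-1)).countP (fun a => decide (a < x)) +
        (s.drop (k-1)).countP (fun a => decide (a < x)) := by
      rw [← List.countP_append, List.take_append_drop]
    rw [this]
    have h2 : (s.drop (k-1)).countP (fun a => decide (a < x)) = 0 := by
      rw [List.countP_eq_zero]
      intro a ha
      obtain ⟨j, hj, hja⟩ := List.mem_iff_getElem.mp ha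
      have hjl : j < s.length - (k-1) := by simpa using hj
      have : s[(k-1) + j]'(by omega) = a := by
        rw [← hja, List.getElem_drop]
      have hle : s.get ⟨k-1, by omega⟩ ≤ a := by
        rw [← this]
        rcases Nat.eq_zero_or_pos j with h0 | h0
        · subst h0; simp [List.get_eq_getElem]
        · simpa [List.get_eq_getElem] using
            List.pairwise_iff_get.mp hsort ⟨k-1, by omega⟩ ⟨k-1+j, by omega⟩ (by simp; omega)
      simp only [decide_eq_true_eq]
      push_neg
      exact le_trans hx hle
    rw [h2, Nat.add_zero]
    calc (s.take (k-1)).countP (fun a => decide (a < x)) ≤ (s.take (k-1)).length :=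
          List.countP_le_length
      _ ≤ k - 1 := by simp [hlen]
  · intro hc
    by_contra hx
    push_neg at hx
    -- all of the first k entries are < x
    have : k ≤ s.countP (fun a => decide (a < x)) := by
      have : (s.take k).countP (fun a => decide (a < x)) = (s.take k).length := by
        rw [List.countP_eq_length]
        intro a ha
        obtain ⟨j, hj, hja⟩ := List.mem_iff_getElem.mp ha
        have hjl : j < k := by simp [hlen] at hj; omega
        have : a = s[j]'(by simp at hj; omega) := by rw [← hja, List.getElem_take]
        subst this
        have hle : s[j]'(by simp at hj; omega) ≤ s.get ⟨k-1, by omega⟩ := by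
          rcases Nat.lt_or_ge j (k-1) with h | h
          · simpa [List.get_eq_getElem] using
              List.pairwise_iff_get.mp hsort ⟨j, by omega⟩ ⟨k-1, by omega⟩ (by simp; omega)
          · have : j = k-1 := by omega
            subst this; simp [List.get_eq_getElem]
        simp only [decide_eq_true_eq]
        exact lt_of_le_of_lt hle hx
      calc k = (s.take k).length := by simp [hlen]; omega
        _ = (s.take k).countP (fun a => decide (a < x)) := this.symm
        _ ≤ s.countP (fun a => decide (a < x)) := by
            conv_rhs => rw [← List.take_append_drop k s]
            rw [List.countP_append]; omega
    omega

lemma rank_cover {n : ℕ} (g : Fin n → ℝ) (k : ℕ) (hkn : k ≤ n) (hk1 : 1 ≤ k) :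
    k ≤ (univ.filter fun j : Fin n =>
      (univ.filter fun i => g i < g j).card ≤ k - 1).card := by
  classical
  by_contra hlt
  push_neg at hlt
  set T := univ.filter fun j : Fin n => (univ.filter fun i => g i < g j).card ≤ k - 1 with hT
  have hS : (univ \ T).Nonempty := by
    rw [← Finset.card_pos, Finset.card_sdiff_of_subset (Finset.subset_univ T)]
    have := Finset.card_fin n
    omega
  obtain ⟨j₀, hj₀S, hj₀min⟩ := Finset.exists_min_image (univ \ T) g hS
  have hj₀ : ¬ ((univ.filter fun i => g i < g j₀).card ≤ k - 1) := by
    simp only [hT, Finset.mem_sdiff, Finset.mem_filter, Finset.mem_univ, true_and] at hj₀S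
    exact hj₀S
  have hsub : (univ.filter fun i => g i < g j₀) ⊆ T := by
    intro i hi
    simp only [Finset.mem_filter, Finset.mem_univ, true_and] at hi
    by_contra hiT
    have : i ∈ univ \ T := by simp [hiT]
    exact absurd hi (not_lt.mpr (hj₀min i this))
  have := Finset.card_le_card hsub
  omega

lemma lessCount_castSucc {m : ℕ} (g : Fin (m + 1) → ℝ) :
    (univ.filter fun i : Fin (m+1) => g i < g (Fin.last m)).card
      = (univ.filter fun i : Fin m => g i.castSucc < g (Fin.last m)).card := by
  classical
  rw [Finset.card_filter, Finset.card_filter, Fin.sum_univ_castSucc]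
  simp

open MeasureTheory
open scoped ENNReal

lemma card_lt_measurable {α : Type*} [MeasurableSpace α] {n : ℕ} (f : Fin n → α → ℝ)
    (hf : ∀ i, Measurable (f i)) (j : Fin n) :
    Measurable (fun a => (univ.filter fun i => f i a < f j a).card) := by
  have : (fun a => (univ.filter fun i => f i a < f j a).card)
      = fun a => ∑ i, if f i a < f j a then 1 else 0 := by
    funext a; rw [Finset.card_filter]
  rw [this]
  exact Finset.measurable_sum _ fun i _ =>
    Measurable.ite (measurableSet_lt (hf i) (hf j)) measurable_const measurable_const

lemma joint_eq_pi {Ω : Type*} [MeasurableSpace Ω] (P : Measure Ω) [IsProbabilityMeasure P]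
    {n : ℕ} (ψ : Fin n → Ω → ℝ) (hψ : ∀ i, Measurable (ψ i))
    (μ : Measure ℝ) [IsProbabilityMeasure μ]
    (hbox : ∀ s : Fin n → Set ℝ, (∀ i, MeasurableSet (s i)) →
      P (⋂ i, ψ i ⁻¹' s i) = ∏ i, μ (s i)) :
    P.map (fun ω i => ψ i ω) = Measure.pi (fun _ : Fin n => μ) := by
  refine (Measure.pi_eq (μ := fun _ : Fin n => μ) fun s hs => ?_).symm
  rw [Measure.map_apply (measurable_pi_lambda _ hψ) (MeasurableSet.univ_pi hs)]
  have : (fun ω i => ψ i ω) ⁻¹' Set.pi Set.univ s = ⋂ i, ψ i ⁻¹' s i := by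
    ext ω; simp [Set.mem_pi]
  rw [this, hbox s hs]

/-- exchangeable rank bound. -/
theorem exchangeable_rank_bound {Ω : Type*} [MeasurableSpace Ω]
    (P : MeasureTheory.Measure Ω) [MeasureTheory.IsProbabilityMeasure P]
    (m : ℕ) (hm : 1 ≤ m) (φ : Fin (m + 1) → Ω → ℝ)
    (hmeas : ∀ i, Measurable (φ i))
    (hindep : ProbabilityTheory.iIndepFun φ P)
    (hid : ∀ i k : Fin (m + 1),
      MeasureTheory.Measure.map (φ i) P = MeasureTheory.Measure.map (φ k) P)
    (k : ℕ) (hk1 : 1 ≤ k) (hkm : k ≤ m) :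
    (k : ℝ) / ((m : ℝ) + 1) ≤
      (P {ω | φ (Fin.last m) ω ≤ orderStat m (fun i => φ i.castSucc ω) k}).toReal := by
  classical
  set μ : Measure ℝ := P.map (φ 0) with hμdef
  have hμprob : IsProbabilityMeasure μ := Measure.isProbabilityMeasure_map (hmeas 0).aemeasurable
  have hμ : ∀ (i : Fin (m+1)) (t : Set ℝ), MeasurableSet t → P (φ i ⁻¹' t) = μ t := by
    intro i t ht
    rw [hμdef, hid 0 i, Measure.map_apply (hmeas i) ht]
  -- joint law of any permuted family is the product measure
  have hjoint : ∀ σ : Equiv.Perm (Fin (m+1)),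
      P.map (fun ω i => φ (σ i) ω) = Measure.pi (fun _ : Fin (m+1) => μ) := by
    intro σ
    refine joint_eq_pi P _ (fun i => hmeas (σ i)) μ ?_
    intro s hs
    have h1 : (⋂ i, φ (σ i) ⁻¹' s i) = ⋂ j, φ j ⁻¹' s (σ.symm j) := by
      ext ω
      simp only [Set.mem_iInter, Set.mem_preimage]
      constructor
      · intro h j
        have := h (σ.symm j)
        rwa [Equiv.apply_symm_apply] at this
      · intro h i
        have := h (σ i)
        rwa [Equiv.symm_apply_apply] at this
    rw [h1]
    have h2 := hindep.measure_inter_preimage_eq_mul Finset.univ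
      (sets := fun j => s (σ.symm j)) (fun j _ => hs (σ.symm j))
    simp only [Finset.mem_univ, Set.iInter_true] at h2
    rw [h2]
    calc (∏ j, P (φ j ⁻¹' s (σ.symm j))) = ∏ j, μ (s (σ.symm j)) := by
          exact Finset.prod_congr rfl fun j _ => hμ j _ (hs (σ.symm j))
      _ = ∏ i, μ (s i) := Equiv.prod_comp σ.symm (fun i => μ (s i))
  -- the events
  set E : Fin (m+1) → Set Ω :=
    fun j => {ω | (univ.filter fun i => φ i ω < φ j ω).card ≤ k - 1} with hE
  set F : Set (Fin (m+1) → ℝ) :=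
    {g | (univ.filter fun i => g i < g (Fin.last m)).card ≤ k - 1} with hF
  have hFmeas : MeasurableSet F :=
    (card_lt_measurable (fun i (g : Fin (m+1) → ℝ) => g i)
      (fun i => measurable_pi_apply i) (Fin.last m))
      (show MeasurableSet (Set.Iic (k-1)) from trivial)
  have hEmeas : ∀ j, MeasurableSet (E j) := fun j =>
    (card_lt_measurable φ hmeas j) (show MeasurableSet (Set.Iic (k-1)) from trivial)
  -- each event has the same probability
  have hsame : ∀ j, P (E j) = Measure.pi (fun _ : Fin (m+1) => μ) F := by
    intro j
    set σ := Equiv.swap j (Fin.last m) with hσ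
    have hpre : (fun ω i => φ (σ i) ω) ⁻¹' F = E j := by
      ext ω
      simp only [hF, hE, Set.mem_preimage, Set.mem_setOf_eq]
      have hlast : σ (Fin.last m) = j := Equiv.swap_apply_right _ _
      simp only [hlast]
      have hcc : (univ.filter fun i => φ (σ i) ω < φ j ω).card
          = (univ.filter fun i => φ i ω < φ j ω).card := by
        rw [Finset.card_filter, Finset.card_filter]
        exact Equiv.sum_comp σ (fun i => if φ i ω < φ j ω then 1 else 0)
      omega
    rw [← hpre, ← Measure.map_apply (measurable_pi_lambda _ fun i => hmeas (σ i)) hFmeas,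
      hjoint σ]
  -- pointwise covering
  have hcover : ∀ ω, (k : ℕ) ≤ (univ.filter fun j => ω ∈ E j).card := by
    intro ω
    have := rank_cover (fun i => φ i ω) k (by omega) hk1
    simpa [hE] using this
  -- sum of probabilities
  have hsum : (k : ℝ≥0∞) ≤ ∑ j, P (E j) := by
    have hptwise : ∀ ω, (k : ℝ≥0∞) ≤ ∑ j, (E j).indicator (fun _ => (1:ℝ≥0∞)) ω := by
      intro ω
      have : (∑ j, (E j).indicator (fun _ => (1:ℝ≥0∞)) ω)
          = ((univ.filter fun j => ω ∈ E j).card : ℝ≥0∞) := by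
        rw [Finset.card_filter, Nat.cast_sum]
        refine Finset.sum_congr rfl fun j _ => ?_
        by_cases h : ω ∈ E j <;> simp [Set.indicator, h]
      rw [this]
      exact_mod_cast Nat.cast_le.mpr (hcover ω)
    calc (k : ℝ≥0∞) = ∫⁻ _, (k : ℝ≥0∞) ∂P := by simp
      _ ≤ ∫⁻ ω, ∑ j, (E j).indicator (fun _ => (1:ℝ≥0∞)) ω ∂P := lintegral_mono hptwise
      _ = ∑ j, ∫⁻ ω, (E j).indicator (fun _ => (1:ℝ≥0∞)) ω ∂P :=
          lintegral_finset_sum _ fun j _ => (measurable_const.indicator (hEmeas j))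
      _ = ∑ j, P (E j) := by
          refine Finset.sum_congr rfl fun j _ => ?_
          rw [lintegral_indicator (hEmeas j), setLIntegral_one]
  have hconst : ∑ j, P (E j) = (m + 1 : ℝ≥0∞) * P (E (Fin.last m)) := by
    have : ∀ j, P (E j) = P (E (Fin.last m)) := fun j => by
      rw [hsame j, hsame (Fin.last m)]
    rw [Finset.sum_congr rfl fun j _ => this j, Finset.sum_const, Finset.card_fin,
      nsmul_eq_mul]
    push_cast
    ring
  -- identify the target event with E (last)
  have htarget : {ω | φ (Fin.last m) ω ≤ orderStat m (fun i => φ i.castSucc ω) k}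
      = E (Fin.last m) := by
    ext ω
    simp only [hE, Set.mem_setOf_eq]
    rw [le_orderStat_iff _ _ k hk1 hkm, ← lessCount_castSucc (fun i => φ i ω)]
  rw [htarget]
  -- convert to real
  have hfin : P (E (Fin.last m)) ≠ ⊤ := measure_ne_top _ _
  have hk' : (k : ℝ≥0∞) ≤ (m + 1 : ℝ≥0∞) * P (E (Fin.last m)) := by
    rw [← hconst]; exact hsum
  have hreal : (k : ℝ) ≤ ((m : ℝ) + 1) * (P (E (Fin.last m))).toReal := by
    have h1 : ((k : ℝ≥0∞)).toReal ≤ ((m + 1 : ℝ≥0∞) * P (E (Fin.last m))).toReal :=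
      ENNReal.toReal_mono (ENNReal.mul_ne_top (by simp) hfin) hk'
    rw [ENNReal.toReal_mul, ENNReal.toReal_natCast,
      show ((m : ℝ≥0∞) + 1).toReal = (m : ℝ) + 1 by
        rw [ENNReal.toReal_add (by simp) (by simp)]; simp] at h1
    exact h1
  rw [div_le_iff₀ (by positivity)]
  linarith [hreal]
end
end
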